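/- Let β, κ, γ > 0 and for ω > 0 let α(ω) = (β/κ)^{1/4}·(ω² − i(γ/β)ω)^{1/4} ∈ ℂ, where z^{1/4} = exp((1/4)·Log z) denotes the principal fourth root. Define C_{2,ω} = cos(α(ω))/(sinh(α(ω)) + sin(α(ω))) − [(1 + cosh(α(ω))cos(α(ω)) + sinh(α(ω))sin(α(ω)))/(2 + 2·cosh(α(ω))cos(α(ω)))]·[(cosh(α(ω)) + cos(α(ω)))/(sinh(α(ω)) + sin(α(ω)))]. Then there exist ω₀ > 0 and M > 0 such that for all ω ≥ ω₀ all denominators in the definition of C_{2,ω} are nonzero and |C_{2,ω}| ≤ M·√ω. -/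

import Mathlib

/-- The characteristic wavenumber `α(ω) = (β/κ)^{1/4}·(ω² − i(γ/β)ω)^{1/4}`, where
`z^{1/4} = exp((1/4)·Log z)` is the principal fourth root. -/
noncomputable def alphaWN (β κ γ ω : ℝ) : ℂ :=
  ((β / κ) ^ ((1:ℝ)/4) : ℝ) *
    Complex.exp ((1/4 : ℂ) * Complex.log ((ω:ℂ) ^ 2 - Complex.I * ((γ:ℂ) / (β:ℂ)) * (ω:ℂ)))

/-- The coefficient `C_{2,ω}` appearing in the closed-form transfer function of the beam. -/
noncomputable def C2coef (β κ γ ω : ℝ) : ℂ :=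
  Complex.cos (alphaWN β κ γ ω) /
      (Complex.sinh (alphaWN β κ γ ω) + Complex.sin (alphaWN β κ γ ω)) -
    ((1 + Complex.cosh (alphaWN β κ γ ω) * Complex.cos (alphaWN β κ γ ω) +
        Complex.sinh (alphaWN β κ γ ω) * Complex.sin (alphaWN β κ γ ω)) /
      (2 + 2 * Complex.cosh (alphaWN β κ γ ω) * Complex.cos (alphaWN β κ γ ω))) *
    ((Complex.cosh (alphaWN β κ γ ω) + Complex.cos (alphaWN β κ γ ω)) /
      (Complex.sinh (alphaWN β κ γ ω) + Complex.sin (alphaWN β κ γ ω)))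

namespace Complex

noncomputable def abs : AbsoluteValue ℂ ℝ where
  toFun z := ‖z‖
  map_mul' := norm_mul
  nonneg' := norm_nonneg
  eq_zero' _ := norm_eq_zero
  add_le' := norm_add_le

lemma norm_eq_abs (z : ℂ) : ‖z‖ = Complex.abs z := rfl

lemma abs_exp (z : ℂ) : Complex.abs (Complex.exp z) = Real.exp z.re := Complex.norm_exp z

lemma abs_two : Complex.abs 2 = 2 := by rw [← norm_eq_abs]; simp

lemma abs_I : Complex.abs Complex.I = 1 := by rw [← norm_eq_abs]; simp

lemma normSq_eq_abs (x : ℂ) : Complex.normSq x = Complex.abs x ^ 2 := Complex.normSq_eq_norm_sq x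

lemma abs_re_le_abs (z : ℂ) : |z.re| ≤ Complex.abs z := Complex.abs_re_le_norm z

lemma abs_le_abs_re_add_abs_im (z : ℂ) : Complex.abs z ≤ |z.re| + |z.im| :=
  Complex.norm_le_abs_re_add_abs_im z

end Complex

namespace C2aux

lemma exp_abs_aux (z : ℂ) : Complex.abs (Complex.exp (-z * Complex.I)) = Real.exp z.im ∧
    Complex.abs (Complex.exp (z * Complex.I)) = Real.exp (-z.im) ∧
    Complex.abs (Complex.exp (-z)) = Real.exp (-z.re) := by
  refine ⟨?_, ?_, ?_⟩ <;> (rw [Complex.abs_exp]; simp)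

lemma abs_add_ge (A B : ℂ) : Complex.abs A - Complex.abs B ≤ Complex.abs (A + B) := by
  have := norm_sub_norm_le A (-B)
  simpa [Complex.norm_eq_abs, sub_neg_eq_add] using this

lemma abs_sin_le' (z : ℂ) (h : |z.im| ≤ 1) : Complex.abs (Complex.sin z) ≤ Real.exp 1 := by
  obtain ⟨h1, h2, -⟩ := exp_abs_aux z
  have hdef : Complex.sin z
      = (Complex.exp (-z * Complex.I) - Complex.exp (z * Complex.I)) * Complex.I / 2 := rfl
  have hb : Complex.abs (Complex.exp (-z * Complex.I) - Complex.exp (z * Complex.I))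
      ≤ Real.exp z.im + Real.exp (-z.im) := by
    rw [← h1, ← h2, ← Complex.norm_eq_abs, ← Complex.norm_eq_abs, ← Complex.norm_eq_abs]
    exact norm_sub_le _ _
  have e1 : Real.exp z.im ≤ Real.exp 1 := Real.exp_le_exp.2 (le_trans (le_abs_self _) h)
  have e2 : Real.exp (-z.im) ≤ Real.exp 1 := Real.exp_le_exp.2 (le_trans (neg_le_abs _) h)
  rw [hdef, map_div₀, map_mul, Complex.abs_I, mul_one, Complex.abs_two]
  linarith

lemma abs_cos_le' (z : ℂ) (h : |z.im| ≤ 1) : Complex.abs (Complex.cos z) ≤ Real.exp 1 := by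
  obtain ⟨h1, h2, -⟩ := exp_abs_aux z
  have hdef : Complex.cos z
      = (Complex.exp (z * Complex.I) + Complex.exp (-z * Complex.I)) / 2 := rfl
  have e1 : Real.exp z.im ≤ Real.exp 1 := Real.exp_le_exp.2 (le_trans (le_abs_self _) h)
  have e2 : Real.exp (-z.im) ≤ Real.exp 1 := Real.exp_le_exp.2 (le_trans (neg_le_abs _) h)
  rw [hdef, map_div₀, Complex.abs_two]
  have := (Complex.abs).add_le (Complex.exp (z * Complex.I)) (Complex.exp (-z * Complex.I))
  rw [h1, h2] at this
  linarith

lemma abs_cosh_le' (z : ℂ) (h : 0 ≤ z.re) : Complex.abs (Complex.cosh z) ≤ Real.exp z.re := by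
  obtain ⟨-, -, h2⟩ := exp_abs_aux z
  have hdef : Complex.cosh z = (Complex.exp z + Complex.exp (-z)) / 2 := rfl
  have h1 : Complex.abs (Complex.exp z) = Real.exp z.re := Complex.abs_exp z
  have e2 : Real.exp (-z.re) ≤ Real.exp z.re := Real.exp_le_exp.2 (by linarith)
  rw [hdef, map_div₀, Complex.abs_two]
  have := (Complex.abs).add_le (Complex.exp z) (Complex.exp (-z))
  rw [h1, h2] at this
  linarith

lemma abs_sinh_le' (z : ℂ) (h : 0 ≤ z.re) : Complex.abs (Complex.sinh z) ≤ Real.exp z.re := by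
  obtain ⟨-, -, h2⟩ := exp_abs_aux z
  have hdef : Complex.sinh z = (Complex.exp z - Complex.exp (-z)) / 2 := rfl
  have h1 : Complex.abs (Complex.exp z) = Real.exp z.re := Complex.abs_exp z
  have e2 : Real.exp (-z.re) ≤ Real.exp z.re := Real.exp_le_exp.2 (by linarith)
  have hb : Complex.abs (Complex.exp z - Complex.exp (-z))
      ≤ Real.exp z.re + Real.exp (-z.re) := by
    rw [← h1, ← h2, ← Complex.norm_eq_abs, ← Complex.norm_eq_abs, ← Complex.norm_eq_abs]
    exact norm_sub_le _ _
  rw [hdef, map_div₀, Complex.abs_two]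
  linarith

lemma abs_sinh_ge' (z : ℂ) :
    (Real.exp z.re - Real.exp (-z.re)) / 2 ≤ Complex.abs (Complex.sinh z) := by
  obtain ⟨-, -, h2⟩ := exp_abs_aux z
  have hdef : Complex.sinh z = (Complex.exp z - Complex.exp (-z)) / 2 := rfl
  have h1 : Complex.abs (Complex.exp z) = Real.exp z.re := Complex.abs_exp z
  have hb : Real.exp z.re - Real.exp (-z.re)
      ≤ Complex.abs (Complex.exp z - Complex.exp (-z)) := by
    rw [← h1, ← h2, ← Complex.norm_eq_abs, ← Complex.norm_eq_abs, ← Complex.norm_eq_abs]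
    exact norm_sub_norm_le _ _
  rw [hdef, map_div₀, Complex.abs_two]
  linarith

lemma abs_cos_ge' (z : ℂ) : |z.im| ≤ Complex.abs (Complex.cos z) := by
  have h := Complex.cos_eq z
  have hsq : (Complex.abs (Complex.cos z))^2 = (Real.cos z.re * Real.cosh z.im)^2
      + (Real.sin z.re * Real.sinh z.im)^2 := by
    rw [← Complex.normSq_eq_abs, h]
    simp [Complex.normSq_apply, Complex.cos_ofReal_re, Complex.sin_ofReal_re,
      Complex.sinh_ofReal_re, Complex.cosh_ofReal_re]
    ring
  have hs : Real.sinh z.im ^ 2 ≤ (Complex.abs (Complex.cos z))^2 := by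
    rw [hsq]
    nlinarith [Real.sin_sq_add_cos_sq z.re, Real.cosh_sq z.im,
      sq_nonneg (Real.cos z.re * Real.sinh z.im), sq_nonneg (Real.cos z.re)]
  have hy : z.im ^ 2 ≤ Real.sinh z.im ^ 2 := by
    have h1 := Real.abs_sinh z.im
    have h2 : |z.im| ≤ Real.sinh |z.im| := Real.self_le_sinh_iff.2 (abs_nonneg z.im)
    nlinarith [abs_nonneg z.im, _root_.sq_abs z.im, _root_.sq_abs (Real.sinh z.im)]
  have hfin : z.im^2 ≤ (Complex.abs (Complex.cos z))^2 := le_trans hy hs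
  have := Real.sqrt_le_sqrt hfin
  rwa [Real.sqrt_sq_eq_abs, Real.sqrt_sq (AbsoluteValue.nonneg _ _)] at this

lemma abs_one_add_cosh_mul_cos_ge (z : ℂ) (hx : 0 ≤ z.re) (hy : |z.im| ≤ 1) :
    Real.exp z.re * |z.im| / 2 - 1 - Real.exp 1 / 2
      ≤ Complex.abs (1 + Complex.cosh z * Complex.cos z) := by
  have hrep : (1 : ℂ) + Complex.cosh z * Complex.cos z
      = Complex.exp z * Complex.cos z / 2 + (1 + Complex.exp (-z) * Complex.cos z / 2) := by
    have hdef : Complex.cosh z = (Complex.exp z + Complex.exp (-z)) / 2 := rfl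
    rw [hdef]; ring
  obtain ⟨-, -, h2⟩ := exp_abs_aux z
  have hA : Complex.abs (Complex.exp z * Complex.cos z / 2)
      = Real.exp z.re * Complex.abs (Complex.cos z) / 2 := by
    rw [map_div₀, map_mul, Complex.abs_exp, Complex.abs_two]
  have hcle : Complex.abs (Complex.cos z) ≤ Real.exp 1 := abs_cos_le' z hy
  have hexneg : Real.exp (-z.re) ≤ 1 := by
    calc Real.exp (-z.re) ≤ Real.exp 0 := Real.exp_le_exp.2 (by linarith)
    _ = 1 := Real.exp_zero
  have hB : Complex.abs (1 + Complex.exp (-z) * Complex.cos z / 2) ≤ 1 + Real.exp 1 / 2 := by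
    have := (Complex.abs).add_le 1 (Complex.exp (-z) * Complex.cos z / 2)
    rw [map_one, map_div₀, map_mul, Complex.abs_two, h2] at this
    have hmul : Real.exp (-z.re) * Complex.abs (Complex.cos z) ≤ 1 * Real.exp 1 :=
      mul_le_mul hexneg hcle (AbsoluteValue.nonneg _ _) zero_le_one
    rw [one_mul] at hmul
    linarith
  have hge := abs_add_ge (Complex.exp z * Complex.cos z / 2)
    (1 + Complex.exp (-z) * Complex.cos z / 2)
  rw [hA] at hge
  rw [hrep]
  have hyc : |z.im| ≤ Complex.abs (Complex.cos z) := abs_cos_ge' z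
  have hE : (0:ℝ) ≤ Real.exp z.re := (Real.exp_pos _).le
  nlinarith


lemma abs_add_ge'' (A B : ℂ) : Complex.abs (A - B) ≤ Complex.abs A + Complex.abs B := by
  have := norm_sub_le A B
  simpa [Complex.norm_eq_abs] using this

end C2aux

section
set_option maxHeartbeats 1000000
open C2aux

/-- For large `ω`, the denominators in `C_{2,ω}` are nonzero and `|C_{2,ω}| ≤ M√ω`. -/
theorem C2coef_bound (β κ γ : ℝ) (hβ : 0 < β) (hκ : 0 < κ) (hγ : 0 < γ) :
    ∃ ω₀ > (0:ℝ), ∃ M > (0:ℝ), ∀ ω : ℝ, ω₀ ≤ ω →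
      Complex.sinh (alphaWN β κ γ ω) + Complex.sin (alphaWN β κ γ ω) ≠ 0 ∧
      2 + 2 * Complex.cosh (alphaWN β κ γ ω) * Complex.cos (alphaWN β κ γ ω) ≠ 0 ∧
      ‖C2coef β κ γ ω‖ ≤ M * Real.sqrt ω := by
  have ha : 0 < (β / κ) ^ ((1:ℝ)/4) := Real.rpow_pos_of_pos (div_pos hβ hκ) _
  set a := (β / κ) ^ ((1:ℝ)/4) with ha_def
  set c := γ / β with hc_def
  have hc : 0 < c := div_pos hγ hβ
  set c2 := a ^ 2 * c / 32 with hc2_def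
  have hc2 : 0 < c2 := by positivity
  have he1 : (1:ℝ) ≤ Real.exp 1 := Real.one_le_exp (by norm_num)
  have heU : Real.exp 1 < 2.7182818286 := Real.exp_one_lt_d9
  set X := max 3 (2 * Real.log ((8 + 4 * Real.exp 1) / c2) + 2) with hX_def
  have hX3 : (3:ℝ) ≤ X := le_max_left _ _
  have hXlog : 2 * Real.log ((8 + 4 * Real.exp 1) / c2) + 2 ≤ X := le_max_right _ _
  have hXpos : (0:ℝ) < X := lt_of_lt_of_le (by norm_num) hX3
  refine ⟨max (max 1 c) (max ((2*a*c)^2) ((2*X/a)^2)), ?_, 11 + 192 * a * Real.exp 1 / c2, ?_, ?_⟩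
  · exact lt_of_lt_of_le one_pos ((le_max_left 1 c).trans (le_max_left _ _))
  · positivity
  intro ω hω
  have hω1 : (1:ℝ) ≤ ω := le_trans ((le_max_left 1 c).trans (le_max_left _ _)) hω
  have hωc : c ≤ ω := le_trans ((le_max_right 1 c).trans (le_max_left _ _)) hω
  have hω2 : (2*a*c)^2 ≤ ω := le_trans ((le_max_left _ _).trans (le_max_right _ _)) hω
  have hω3 : (2*X/a)^2 ≤ ω := le_trans ((le_max_right _ _).trans (le_max_right _ _)) hω
  have hω0 : (0:ℝ) < ω := lt_of_lt_of_le one_pos hω1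
  -- the complex number w
  set w := (ω:ℂ) ^ 2 - Complex.I * ((γ:ℂ) / (β:ℂ)) * (ω:ℂ) with hw_def
  have hwrepr : w = ((ω^2 : ℝ) : ℂ) - ((c*ω : ℝ):ℂ) * Complex.I := by
    rw [hw_def, hc_def]; push_cast; ring
  have hwre : w.re = ω^2 := by rw [hwrepr]; simp [← Complex.ofReal_pow]
  have hwim : w.im = -(c*ω) := by rw [hwrepr]; simp [← Complex.ofReal_pow]
  have habs_low : ω^2 ≤ Complex.abs w := by
    have h := Complex.abs_re_le_abs w
    rw [hwre, abs_of_nonneg (by positivity : (0:ℝ) ≤ ω^2)] at h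
    exact h
  have habs_pos : (0:ℝ) < Complex.abs w := lt_of_lt_of_le (by positivity) habs_low
  have habs_hi : Complex.abs w ≤ 2*ω^2 := by
    have h := Complex.abs_le_abs_re_add_abs_im w
    rw [hwre, hwim, abs_of_nonneg (by positivity : (0:ℝ) ≤ ω^2),
      abs_of_nonpos (by nlinarith : -(c*ω) ≤ 0)] at h
    nlinarith
  -- the argument
  set θ := Complex.arg w with hθ_def
  have hθ2 : |θ| ≤ Real.pi/2 := Complex.abs_arg_le_pi_div_two_iff.2 (by rw [hwre]; positivity)
  have hθneg : θ < 0 := Complex.arg_neg_iff.2 (by rw [hwim]; nlinarith)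
  have hsinθ : Real.sin θ = -(c*ω)/Complex.abs w := by
    rw [hθ_def, Complex.sin_arg, hwim, Complex.norm_eq_abs]
  set s := -θ with hs_def
  have hs_pos : 0 < s := by simp [hs_def]; linarith
  have hs_le : s ≤ Real.pi/2 := by
    have h : |θ| = s := by rw [abs_of_neg hθneg]
    linarith [h ▸ hθ2]
  have hsins : Real.sin s = c*ω/Complex.abs w := by
    rw [hs_def, Real.sin_neg, hsinθ]; field_simp
  have hsins_low : c/(2*ω) ≤ Real.sin s := by
    rw [hsins, div_le_div_iff₀ (by positivity) habs_pos]
    nlinarith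
  have hsins_hi : Real.sin s ≤ c/ω := by
    rw [hsins, div_le_div_iff₀ habs_pos (by positivity)]
    nlinarith
  have hs_ge : c/(2*ω) ≤ s := le_trans hsins_low (Real.sin_le hs_pos.le)
  have hpi : Real.pi ≤ 4 := Real.pi_le_four
  have hpi0 : 0 < Real.pi := Real.pi_pos
  have hs4_le1 : s/4 ≤ 1 := by linarith
  -- bounds on sin (s/4)
  have hsin4_low : 3/16 * s ≤ Real.sin (s/4) := by
    have h := Real.sin_gt_sub_cube (by linarith : 0 < s/4)
    have hcube : (s/4)^3 ≤ s/4 := by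
      calc (s/4)^3 ≤ (s/4)^1 := pow_le_pow_of_le_one (by linarith) hs4_le1 (by norm_num)
      _ = s/4 := pow_one _
    linarith
  have hsin4_hi : Real.sin (s/4) ≤ Real.sin s := by
    have hmem1 : s/4 ∈ Set.Icc (-(Real.pi/2)) (Real.pi/2) := ⟨by linarith, by linarith⟩
    have hmem2 : s ∈ Set.Icc (-(Real.pi/2)) (Real.pi/2) := ⟨by linarith, hs_le⟩
    exact Real.strictMonoOn_sin.monotoneOn hmem1 hmem2 (by linarith)
  have hsin4_pos : 0 < Real.sin (s/4) :=
    lt_of_lt_of_le (show (0:ℝ) < 3/16*s by linarith) hsin4_low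
  -- bounds on cos (s/4)
  have hcos4_low : 1/2 ≤ Real.cos (s/4) := by
    have h := Real.cos_le_cos_of_nonneg_of_le_pi (show (0:ℝ) ≤ s/4 by linarith)
      (show Real.pi/3 ≤ Real.pi by linarith) (show s/4 ≤ Real.pi/3 by linarith)
    rw [Real.cos_pi_div_three] at h
    exact h
  have hcos4_hi : Real.cos (s/4) ≤ 1 := Real.cos_le_one _
  have hcos4_nonneg : 0 ≤ Real.cos (s/4) := by linarith
  -- sqrt ω
  set t := Real.sqrt ω with ht_def
  have ht_pos : 0 < t := by rw [ht_def]; exact Real.sqrt_pos.2 hω0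
  have hsqω : t * t = ω := by rw [ht_def]; exact Real.mul_self_sqrt hω0.le
  have ht1 : 1 ≤ t := by
    rw [ht_def]
    exact (Real.le_sqrt zero_le_one hω0.le).2 (by rw [one_pow]; exact hω1)
  -- ρ bounds
  set ρ := Real.exp (Real.log (Complex.abs w) / 4) with hρ_def
  have hρ_pos : 0 < ρ := Real.exp_pos _
  have hsqrt_eq : t = Real.exp (Real.log ω / 2) := by
    rw [ht_def, ← Real.log_sqrt hω0.le, Real.exp_log (Real.sqrt_pos.2 hω0)]
  have hρ_low : t ≤ ρ := by
    rw [hsqrt_eq, hρ_def]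
    apply Real.exp_le_exp.2
    have hlog : Real.log (ω^2) ≤ Real.log (Complex.abs w) :=
      Real.log_le_log (by positivity) habs_low
    rw [Real.log_pow] at hlog
    push_cast at hlog
    linarith
  have hρ_hi : ρ ≤ 2 * t := by
    have h2 : (2:ℝ) * t = Real.exp (Real.log 2 + Real.log ω / 2) := by
      rw [Real.exp_add, hsqrt_eq, Real.exp_log two_pos]
    rw [h2, hρ_def]
    apply Real.exp_le_exp.2
    have hlog : Real.log (Complex.abs w) ≤ Real.log (2*ω^2) :=
      Real.log_le_log habs_pos habs_hi
    rw [Real.log_mul (by norm_num) (by positivity), Real.log_pow] at hlog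
    have hlog2 : (0:ℝ) ≤ Real.log 2 := Real.log_nonneg (by norm_num)
    push_cast at hlog
    linarith
  -- re and im of z
  set z := alphaWN β κ γ ω with hz_def
  have h14 : (1/4 : ℂ) = ((1/4 : ℝ) : ℂ) := by norm_num
  have hure : ((1/4 : ℂ) * Complex.log w).re = Real.log (Complex.abs w) / 4 := by
    rw [h14, Complex.re_ofReal_mul, Complex.log_re, Complex.norm_eq_abs]; ring
  have huim : ((1/4 : ℂ) * Complex.log w).im = θ / 4 := by
    rw [h14, Complex.im_ofReal_mul, Complex.log_im, hθ_def]; ring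
  have hzre : z.re = a * (ρ * Real.cos (s/4)) := by
    rw [hz_def, alphaWN, Complex.re_ofReal_mul, Complex.exp_re, hure, huim]
    rw [show θ/4 = -(s/4) by rw [hs_def]; ring, Real.cos_neg]
  have hzim : z.im = -(a * (ρ * Real.sin (s/4))) := by
    rw [hz_def, alphaWN, Complex.im_ofReal_mul, Complex.exp_im, hure, huim]
    rw [show θ/4 = -(s/4) by rw [hs_def]; ring, Real.sin_neg]
    rw [hρ_def, ha_def]
    ring
  have hzim_abs : |z.im| = a * (ρ * Real.sin (s/4)) := by
    rw [hzim, abs_neg, abs_of_nonneg (by positivity)]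
  -- x bounds
  have hx_low : a * t / 2 ≤ z.re := by
    rw [hzre]
    have h1 : t * (1/2) ≤ ρ * Real.cos (s/4) :=
      mul_le_mul hρ_low hcos4_low (by norm_num) hρ_pos.le
    calc a * t/2 = a * (t * (1/2)) := by ring
    _ ≤ a * (ρ * Real.cos (s/4)) := mul_le_mul_of_nonneg_left h1 ha.le
  have hx_hi : z.re ≤ 2 * a * t := by
    rw [hzre]
    calc a * (ρ * Real.cos (s/4)) ≤ a * ((2*t)*1) :=
          mul_le_mul_of_nonneg_left
            (mul_le_mul hρ_hi hcos4_hi hcos4_nonneg (by positivity)) ha.le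
    _ = 2*a*t := by ring
  have hsqrtX : 2*X/a ≤ t := by
    rw [ht_def]; exact (Real.le_sqrt (by positivity) hω0.le).2 hω3
  have hxX : X ≤ z.re := by
    have h1 : a * (2*X/a) ≤ a * t := mul_le_mul_of_nonneg_left hsqrtX ha.le
    have heq : a * (2*X/a) = 2*X := by field_simp
    linarith
  have hx3 : (3:ℝ) ≤ z.re := le_trans hX3 hxX
  have hx_pos : (0:ℝ) < z.re := by linarith
  -- y bounds
  have h2ac : 2*a*c ≤ t := by
    rw [ht_def]; exact (Real.le_sqrt (by positivity) hω0.le).2 hω2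
  have hy_le1 : |z.im| ≤ 1 := by
    rw [hzim_abs]
    have hss : Real.sin (s/4) ≤ c/ω := le_trans hsin4_hi hsins_hi
    have h1 : a * (ρ * Real.sin (s/4)) ≤ a * ((2*t) * (c/ω)) :=
      mul_le_mul_of_nonneg_left
        (mul_le_mul hρ_hi hss hsin4_pos.le (by positivity)) ha.le
    have h2 : a * ((2*t) * (c/ω)) ≤ 1 := by
      rw [← hsqω]
      have e1 : a * ((2*t) * (c/(t*t))) = (2*a*c)/t := by
        field_simp
      rw [e1, div_le_one ht_pos]
      linarith
    linarith
  have hyx : c2 ≤ z.re * |z.im| := by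
    have hterm : 3/16 * (c/(2*ω)) ≤ Real.sin (s/4) := by
      calc 3/16*(c/(2*ω)) ≤ 3/16*s := mul_le_mul_of_nonneg_left hs_ge (by norm_num)
      _ ≤ _ := hsin4_low
    have h1 : a * (t * (3/16 * (c/(2*ω)))) ≤ a * (ρ * Real.sin (s/4)) :=
      mul_le_mul_of_nonneg_left
        (mul_le_mul hρ_low hterm (by positivity) hρ_pos.le) ha.le
    have h2 : (a*t/2) * (a * (t * (3/16 * (c/(2*ω))))) ≤ z.re * |z.im| := by
      rw [hzim_abs]
      exact mul_le_mul hx_low h1 (by positivity) (by linarith)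
    have h3 : (a*t/2) * (a * (t * (3/16 * (c/(2*ω))))) = 3*a^2*c/64 * ((t*t)/ω) := by
      ring
    rw [h3, hsqω, div_self (ne_of_gt hω0), mul_one] at h2
    have h4 : (0:ℝ) ≤ a^2*c := by positivity
    rw [hc2_def]
    linarith
  -- exponential bounds
  set E := Real.exp z.re with hE_def
  have hE_pos : 0 < E := Real.exp_pos _
  have hE1 : 1 ≤ E := Real.one_le_exp hx_pos.le
  have hEneg : Real.exp (-z.re) ≤ 1 := by
    rw [show (1:ℝ) = Real.exp 0 from (Real.exp_zero).symm]
    exact Real.exp_le_exp.2 (by linarith)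
  have hE20 : 20 ≤ E := by
    have h1 : Real.exp 3 ≤ E := by rw [hE_def]; exact Real.exp_le_exp.2 hx3
    have h3 := Real.exp_one_gt_d9
    have h4 : (2.7182818283:ℝ)^3 ≤ (Real.exp 1)^3 :=
      pow_le_pow_left₀ (by norm_num) h3.le 3
    have h2 : (Real.exp 1)^3 = Real.exp 3 := by
      rw [← Real.exp_nat_mul]; norm_num
    have h5 : (20:ℝ) ≤ (2.7182818283:ℝ)^3 := by norm_num
    linarith
  have habs_sin : Complex.abs (Complex.sin z) ≤ Real.exp 1 := abs_sin_le' z hy_le1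
  have habs_cos : Complex.abs (Complex.cos z) ≤ Real.exp 1 := abs_cos_le' z hy_le1
  have habs_cosh : Complex.abs (Complex.cosh z) ≤ E := abs_cosh_le' z hx_pos.le
  have habs_sinh_le : Complex.abs (Complex.sinh z) ≤ E := abs_sinh_le' z hx_pos.le
  have habs_sinh_ge : (E - Real.exp (-z.re))/2 ≤ Complex.abs (Complex.sinh z) := abs_sinh_ge' z
  -- the denominator S = sinh z + sin z
  have hS_low : E/4 ≤ Complex.abs (Complex.sinh z + Complex.sin z) := by
    have h1 := abs_add_ge (Complex.sinh z) (Complex.sin z)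
    linarith
  have hS_pos : 0 < Complex.abs (Complex.sinh z + Complex.sin z) :=
    lt_of_lt_of_le (by linarith) hS_low
  have hS_ne : Complex.sinh z + Complex.sin z ≠ 0 := by
    intro h; rw [h, map_zero] at hS_pos; linarith
  -- the denominator D = 2 + 2 cosh cos
  have hg_low0 := abs_one_add_cosh_mul_cos_ge z hx_pos.le hy_le1
  have hEM : (8 + 4*Real.exp 1)/c2 * (z.re/2) ≤ E := by
    have hM' : (0:ℝ) < (8 + 4*Real.exp 1)/c2 := by positivity
    have hhalf : Real.log ((8 + 4*Real.exp 1)/c2) + 1 ≤ z.re/2 := by linarith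
    have hexp1 : (8 + 4*Real.exp 1)/c2 ≤ Real.exp (z.re/2) := by
      calc (8 + 4*Real.exp 1)/c2 = Real.exp (Real.log ((8 + 4*Real.exp 1)/c2)) :=
            (Real.exp_log hM').symm
      _ ≤ Real.exp (z.re/2) := Real.exp_le_exp.2 (by linarith)
    have hexp2 : z.re/2 ≤ Real.exp (z.re/2) := by linarith [Real.add_one_le_exp (z.re/2)]
    have hmul : (8 + 4*Real.exp 1)/c2 * (z.re/2) ≤ Real.exp (z.re/2) * Real.exp (z.re/2) :=
      mul_le_mul hexp1 hexp2 (by linarith) (Real.exp_pos _).le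
    rw [← Real.exp_add] at hmul
    calc (8 + 4*Real.exp 1)/c2 * (z.re/2) ≤ Real.exp (z.re/2 + z.re/2) := hmul
    _ = E := by rw [hE_def]; norm_num
  have hg_low : c2/4 * (E/z.re) ≤ Complex.abs (1 + Complex.cosh z * Complex.cos z) := by
    have heq : c2/4 * (E/z.re) = c2*E/4/z.re := by ring
    rw [heq, div_le_iff₀ hx_pos]
    have h1 : E*c2/2 ≤ E*|z.im|/2*z.re := by
      have hm := mul_le_mul_of_nonneg_left hyx (le_of_lt (half_pos hE_pos))
      ring_nf at hm ⊢
      linarith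
    have h2 : (1 + Real.exp 1/2)*z.re ≤ c2*E/4 := by
      have hm := mul_le_mul_of_nonneg_right hEM
        (le_of_lt (show (0:ℝ) < c2/4 by positivity))
      have heq2 : (8 + 4*Real.exp 1)/c2 * (z.re/2) * (c2/4) = (1 + Real.exp 1/2)*z.re := by
        field_simp; ring
      rw [heq2] at hm
      linarith
    have h3 := mul_le_mul_of_nonneg_right hg_low0 hx_pos.le
    ring_nf at h1 h2 h3 ⊢
    linarith [h1, h2, h3]
  have habs_g_pos : 0 < Complex.abs (1 + Complex.cosh z * Complex.cos z) :=
    lt_of_lt_of_le (by positivity) hg_low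
  have hD_eq : Complex.abs (2 + 2*Complex.cosh z * Complex.cos z)
      = 2 * Complex.abs (1 + Complex.cosh z * Complex.cos z) := by
    have h : (2 + 2*Complex.cosh z*Complex.cos z : ℂ)
        = 2*(1 + Complex.cosh z*Complex.cos z) := by ring
    rw [h, map_mul, Complex.abs_two]
  have hD_ne : (2 + 2*Complex.cosh z*Complex.cos z : ℂ) ≠ 0 := by
    intro h
    rw [h, map_zero] at hD_eq
    linarith
  -- numerators
  have hN : Complex.abs (1 + Complex.cosh z*Complex.cos z + Complex.sinh z*Complex.sin z)
      ≤ 3*Real.exp 1*E := by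
    have h1 := (Complex.abs).add_le (1 + Complex.cosh z*Complex.cos z)
      (Complex.sinh z*Complex.sin z)
    have h2 := (Complex.abs).add_le 1 (Complex.cosh z*Complex.cos z)
    rw [map_one] at h2
    have h3 : Complex.abs (Complex.cosh z*Complex.cos z) ≤ E * Real.exp 1 := by
      rw [map_mul]
      exact mul_le_mul habs_cosh habs_cos (AbsoluteValue.nonneg _ _) hE_pos.le
    have h4 : Complex.abs (Complex.sinh z*Complex.sin z) ≤ E * Real.exp 1 := by
      rw [map_mul]
      exact mul_le_mul habs_sinh_le habs_sin (AbsoluteValue.nonneg _ _) hE_pos.le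
    have h5 : (1:ℝ)*1 ≤ Real.exp 1 * E := mul_le_mul he1 hE1 zero_le_one (by linarith)
    rw [one_mul] at h5
    linarith [h1, h2, h3, h4, h5]
  have hCc : Complex.abs (Complex.cosh z + Complex.cos z) ≤ 4*E := by
    have h1 := (Complex.abs).add_le (Complex.cosh z) (Complex.cos z)
    linarith
  -- final assembly
  refine ⟨hS_ne, hD_ne, ?_⟩
  have hC2eq : C2coef β κ γ ω = Complex.cos z / (Complex.sinh z + Complex.sin z)
      - ((1 + Complex.cosh z*Complex.cos z + Complex.sinh z*Complex.sin z)
          / (2 + 2*Complex.cosh z*Complex.cos z))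
        * ((Complex.cosh z + Complex.cos z) / (Complex.sinh z + Complex.sin z)) := rfl
  rw [hC2eq]
  have hsplit := abs_add_ge'' (Complex.cos z / (Complex.sinh z + Complex.sin z))
      (((1 + Complex.cosh z*Complex.cos z + Complex.sinh z*Complex.sin z)
          / (2 + 2*Complex.cosh z*Complex.cos z))
        * ((Complex.cosh z + Complex.cos z) / (Complex.sinh z + Complex.sin z)))
  rw [map_div₀, map_mul, map_div₀, map_div₀] at hsplit
  -- term 1
  have hD_low : c2/2*(E/z.re) ≤ Complex.abs (2 + 2*Complex.cosh z*Complex.cos z) := by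
    rw [hD_eq]; linarith
  have hD_pos : 0 < Complex.abs (2 + 2*Complex.cosh z*Complex.cos z) :=
    lt_of_lt_of_le (by positivity) hD_low
  have ht1' : Complex.abs (Complex.cos z) / Complex.abs (Complex.sinh z + Complex.sin z)
      ≤ 11 := by
    have hstep : Complex.abs (Complex.cos z) / Complex.abs (Complex.sinh z + Complex.sin z)
        ≤ Real.exp 1/(E/4) :=
      div_le_div₀ (Real.exp_pos 1).le habs_cos (by linarith) hS_low
    have heq : Real.exp 1/(E/4) = 4*Real.exp 1/E := by field_simp
    have hlast : 4*Real.exp 1/E ≤ 4*Real.exp 1 := by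
      apply div_le_self (by positivity) hE1
    rw [heq] at hstep
    linarith
  -- term 2
  have ht2' : Complex.abs (1 + Complex.cosh z*Complex.cos z + Complex.sinh z*Complex.sin z)
      / Complex.abs (2 + 2*Complex.cosh z*Complex.cos z) ≤ 6*Real.exp 1*z.re/c2 := by
    have hstep : Complex.abs (1 + Complex.cosh z*Complex.cos z + Complex.sinh z*Complex.sin z)
        / Complex.abs (2 + 2*Complex.cosh z*Complex.cos z)
        ≤ (3*Real.exp 1*E)/(c2/2*(E/z.re)) :=
      div_le_div₀ (by positivity) hN (by positivity) hD_low
    have heq : (3*Real.exp 1*E)/(c2/2*(E/z.re)) = 6*Real.exp 1*z.re/c2 := by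
      field_simp
      ring
    rw [heq] at hstep
    exact hstep
  -- term 3
  have ht3' : Complex.abs (Complex.cosh z + Complex.cos z)
      / Complex.abs (Complex.sinh z + Complex.sin z) ≤ 16 := by
    have hstep : Complex.abs (Complex.cosh z + Complex.cos z)
        / Complex.abs (Complex.sinh z + Complex.sin z) ≤ (4*E)/(E/4) :=
      div_le_div₀ (by positivity) hCc (by linarith) hS_low
    have heq : (4*E)/(E/4) = 16 := by field_simp; ring
    rw [heq] at hstep
    exact hstep
  have hprod : Complex.abs (1 + Complex.cosh z*Complex.cos z + Complex.sinh z*Complex.sin z)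
      / Complex.abs (2 + 2*Complex.cosh z*Complex.cos z)
      * (Complex.abs (Complex.cosh z + Complex.cos z)
        / Complex.abs (Complex.sinh z + Complex.sin z))
      ≤ (6*Real.exp 1*z.re/c2) * 16 := by
    apply mul_le_mul ht2' ht3' (div_nonneg (AbsoluteValue.nonneg _ _) (AbsoluteValue.nonneg _ _))
      (by positivity)
  have h96 : 6*Real.exp 1*z.re/c2 * 16 ≤ 192*a*Real.exp 1/c2*t := by
    have heq : 192*a*Real.exp 1/c2*t = 192*a*Real.exp 1*t/c2 := by ring
    have heq2 : 6*Real.exp 1*z.re/c2 * 16 = 96*Real.exp 1*z.re/c2 := by ring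
    rw [heq, heq2, div_le_div_iff₀ hc2 hc2]
    have hmm := mul_le_mul_of_nonneg_right hx_hi
      (show (0:ℝ) ≤ 96*Real.exp 1*c2 by positivity)
    ring_nf at hmm ⊢
    linarith
  have h11 : (11:ℝ) ≤ 11 * t := by linarith
  calc Complex.abs (Complex.cos z / (Complex.sinh z + Complex.sin z)
      - (1 + Complex.cosh z*Complex.cos z + Complex.sinh z*Complex.sin z)
          / (2 + 2*Complex.cosh z*Complex.cos z)
        * ((Complex.cosh z + Complex.cos z) / (Complex.sinh z + Complex.sin z)))
      ≤ Complex.abs (Complex.cos z) / Complex.abs (Complex.sinh z + Complex.sin z)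
        + Complex.abs (1 + Complex.cosh z*Complex.cos z + Complex.sinh z*Complex.sin z)
          / Complex.abs (2 + 2*Complex.cosh z*Complex.cos z)
          * (Complex.abs (Complex.cosh z + Complex.cos z)
            / Complex.abs (Complex.sinh z + Complex.sin z)) := hsplit
    _ ≤ 11 + 192*a*Real.exp 1/c2*t := by linarith
    _ ≤ (11 + 192 * a * Real.exp 1 / c2) * t := by
        have : (11 + 192 * a * Real.exp 1 / c2) * t = 11*t + 192*a*Real.exp 1/c2*t := by ring
        rw [this]
        linarith

end
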